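/- Let b>0, σ>0 satisfy σ² ≤ 2b, let T>0, x₀>0. For each integer n > 2T and each C>0, let X⁽ⁿ⁾ be the additive Euler scheme and X⁽ⁿ'ᶜ⁾ the truncated Euler scheme driven by the same i.i.d. variables q₁,…,qₙ with P(q_k = ±√(T/n)) = 1/2 (that is, X₀⁽ⁿ⁾ = X₀⁽ⁿ'ᶜ⁾ = x₀, X_k⁽ⁿ⁾ = X_{k−1}⁽ⁿ⁾ + (b − X_{k−1}⁽ⁿ⁾)T/n + σ q_k √(X_{k−1}⁽ⁿ⁾) and X_k⁽ⁿ'ᶜ⁾ = X_{k−1}⁽ⁿ'ᶜ⁾ + (b − min(X_{k−1}⁽ⁿ'ᶜ⁾,C))T/n + σ q_k √(min(X_{k−1}⁽ⁿ'ᶜ⁾,C))). Then there is a constant K depending only on b, σ, T, x₀ such that for all n > 2T and all C > 0, P( ∃ k, 0 ≤ k ≤ n, with X_k⁽ⁿ⁾ ≠ X_k⁽ⁿ'ᶜ⁾ ) ≤ K / C²; in particular sup_{n > 2T} P( ∃ k ≤ n: X_k⁽ⁿ⁾ ≠ X_k⁽ⁿ'ᶜ⁾ ) → 0 as C → ∞.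 -/

import Mathlib

open MeasureTheory ProbabilityTheory

private lemma cir_aux_nonneg {b σ dt x e : ℝ} (hb : 0 < b) (hσ : 0 < σ) (hσ2 : σ ^ 2 ≤ 2 * b)
    (hdt : 0 < dt) (hdt2 : dt ≤ 1 / 2) (hx : 0 ≤ x) (he : |e| ≤ Real.sqrt dt) :
    0 ≤ x + (b - x) * dt + σ * e * Real.sqrt x := by
  have hs : Real.sqrt x ^ 2 = x := Real.sq_sqrt hx
  have hd : Real.sqrt dt ^ 2 = dt := Real.sq_sqrt hdt.le
  have hsn : 0 ≤ Real.sqrt x := Real.sqrt_nonneg x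
  have hdn : 0 ≤ Real.sqrt dt := Real.sqrt_nonneg dt
  have he1 : -Real.sqrt dt ≤ e := neg_le_of_abs_le he
  have h1 : -(σ * Real.sqrt dt * Real.sqrt x) ≤ σ * e * Real.sqrt x := by
    have h2 : σ * (-Real.sqrt dt) ≤ σ * e := mul_le_mul_of_nonneg_left he1 hσ.le
    nlinarith
  set s := Real.sqrt x with hs'
  set d := Real.sqrt dt with hd'
  have h3 : (0:ℝ) < 1 - d ^ 2 := by rw [hd]; linarith
  have h4 : (0:ℝ) ≤ 4 * b * (1 - d ^ 2) - σ ^ 2 := by rw [hd]; nlinarith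
  have key : 0 ≤ x + (b - x) * dt - σ * d * s := by
    rw [← hs, ← hd]
    nlinarith [sq_nonneg (2 * (1 - d ^ 2) * s - σ * d), mul_nonneg (sq_nonneg d) h4, h3,
      mul_pos h3 h3]
  linarith

private lemma cir_aux_drift {b σ dt x : ℝ} (hb : 0 < b) (hσ : 0 < σ)
    (hdt : 0 < dt) (hdt2 : dt ≤ 1 / 2) (hx : 0 ≤ x) :
    2 * x * ((b - x) * dt) + ((b - x) * dt) ^ 2 + σ ^ 2 * x * dt
      ≤ dt * (b ^ 2 + (2 * b + σ ^ 2) ^ 2 / 4) := by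
  have h1 : 2 * x * (b - x) + (b - x) ^ 2 * dt + σ ^ 2 * x
      ≤ b ^ 2 + (2 * b + σ ^ 2) ^ 2 / 4 := by
    nlinarith [sq_nonneg (2 * x - (2 * b + σ ^ 2)),
      mul_nonneg (sq_nonneg (b - x)) (by linarith : (0:ℝ) ≤ 1 / 2 - dt),
      mul_nonneg hx hb.le, sq_nonneg x]
  calc 2 * x * ((b - x) * dt) + ((b - x) * dt) ^ 2 + σ ^ 2 * x * dt
      = dt * (2 * x * (b - x) + (b - x) ^ 2 * dt + σ ^ 2 * x) := by ring
    _ ≤ dt * (b ^ 2 + (2 * b + σ ^ 2) ^ 2 / 4) := by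
        exact mul_le_mul_of_nonneg_left h1 hdt.le

private lemma cir_aux_Abound {b σ dt x Rm : ℝ} (hb : 0 < b) (hσ : 0 < σ)
    (hdt : 0 < dt) (hdt2 : dt ≤ 1 / 2) (hx : 0 ≤ x) (hxR : x ≤ Rm) :
    |2 * x * ((b - x) * dt) + ((b - x) * dt) ^ 2 + σ ^ 2 * x * dt|
      ≤ (Rm + b + 1) ^ 2 * (3 + σ ^ 2) := by
  have hR0 : 0 ≤ Rm := le_trans hx hxR
  set E : ℝ := Rm + b + 1 with hEdef
  have hE1 : 1 ≤ E := by rw [hEdef]; linarith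
  have hu : |(b - x) * dt| ≤ E := by
    rw [abs_mul, abs_of_pos hdt]
    have h1 : |b - x| ≤ b + Rm := abs_le.2 ⟨by linarith, by linarith⟩
    calc |b - x| * dt ≤ (b + Rm) * 1 := by
          apply mul_le_mul h1 (by linarith) hdt.le (by linarith)
      _ ≤ E := by rw [hEdef]; linarith
  obtain ⟨hul, hur⟩ := abs_le.1 hu
  have hxE : x ≤ E := by rw [hEdef]; linarith
  have hdt1 : dt ≤ 1 := by linarith
  have hxdt : x * dt ≤ E := le_trans (mul_le_of_le_one_right hx hdt1) hxE
  have hEsq : E ≤ E ^ 2 := by nlinarith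
  have hxE2 : x * E ≤ E * E := mul_le_mul_of_nonneg_right hxE (by linarith)
  have hxu : x * ((b - x) * dt) ≤ E * E :=
    le_trans (mul_le_mul_of_nonneg_left hur hx) hxE2
  have hxl : -(E * E) ≤ x * ((b - x) * dt) := by
    have h1 : x * (-E) ≤ x * ((b - x) * dt) := mul_le_mul_of_nonneg_left hul hx
    nlinarith
  have hsq : ((b - x) * dt) ^ 2 ≤ E ^ 2 := sq_le_sq' hul hur
  have hσxdt : σ ^ 2 * (x * dt) ≤ σ ^ 2 * E := mul_le_mul_of_nonneg_left hxdt (sq_nonneg σ)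
  have hσE : σ ^ 2 * E ≤ σ ^ 2 * E ^ 2 := mul_le_mul_of_nonneg_left hEsq (sq_nonneg σ)
  rw [abs_le]
  constructor
  · nlinarith [sq_nonneg ((b - x) * dt), mul_nonneg (sq_nonneg σ) (mul_nonneg hx hdt.le)]
  · nlinarith []

private lemma cir_aux_Bbound {b σ dt x Rm : ℝ} (hb : 0 < b) (hσ : 0 < σ)
    (hdt : 0 < dt) (hdt2 : dt ≤ 1 / 2) (hx : 0 ≤ x) (hxR : x ≤ Rm) :
    |2 * σ * Real.sqrt x * (x + (b - x) * dt)| ≤ 4 * σ * (Rm + b + 1) ^ 2 := by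
  have hR0 : 0 ≤ Rm := le_trans hx hxR
  set E : ℝ := Rm + b + 1 with hEdef
  have hE1 : 1 ≤ E := by rw [hEdef]; linarith
  have hsE : Real.sqrt x ≤ E := by
    calc Real.sqrt x ≤ Real.sqrt (E ^ 2) := Real.sqrt_le_sqrt (by nlinarith)
      _ = E := Real.sqrt_sq (by linarith)
  have hu : |(b - x) * dt| ≤ E := by
    rw [abs_mul, abs_of_pos hdt]
    have h1 : |b - x| ≤ b + Rm := abs_le.2 ⟨by linarith, by linarith⟩
    calc |b - x| * dt ≤ (b + Rm) * 1 := by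
          apply mul_le_mul h1 (by linarith) hdt.le (by linarith)
      _ ≤ E := by rw [hEdef]; linarith
  have hxE : x ≤ E := by rw [hEdef]; linarith
  have h2 : |x + (b - x) * dt| ≤ 2 * E := by
    obtain ⟨hul, hur⟩ := abs_le.1 hu
    rw [abs_le]; constructor <;> [linarith; linarith]
  rw [abs_mul, abs_of_nonneg (by positivity : (0:ℝ) ≤ 2 * σ * Real.sqrt x)]
  calc 2 * σ * Real.sqrt x * |x + (b - x) * dt| ≤ 2 * σ * E * (2 * E) := by
        apply mul_le_mul _ h2 (abs_nonneg _) (by positivity)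
        apply mul_le_mul_of_nonneg_left hsE (by positivity)
    _ = 4 * σ * E ^ 2 := by ring

private lemma cir_meas_B {Ω : Type} {M : MeasurableSpace Ω} {X q : ℕ → Ω → ℝ}
    {x₀ b σ T C dtv nr : ℝ} {m : ℕ}
    (hX0 : ∀ ω, X 0 ω = x₀)
    (hXrec : ∀ j, 1 ≤ j → j ≤ m → ∀ ω,
      X j ω = X (j - 1) ω + (b - X (j - 1) ω) * T / nr + σ * q j ω * Real.sqrt (X (j - 1) ω))
    (hq' : ∀ j, 1 ≤ j → j ≤ m → Measurable[M] (q j)) :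
    Measurable[M] (fun ω => Set.indicator {ω' | ∀ j ≤ m, X j ω' ≤ C} (fun _ => (1:ℝ)) ω *
      (2 * σ * Real.sqrt (X m ω) * (X m ω + (b - X m ω) * dtv))) := by
  have hXM : ∀ j, j ≤ m → Measurable[M] (X j) := by
    intro j
    induction j with
    | zero =>
      intro _
      have hXe : X 0 = fun _ => x₀ := funext hX0
      rw [hXe]; exact measurable_const
    | succ i ih =>
      intro hj
      have ihm := ih (by omega)
      have hXe : X (i + 1) = fun ω =>
          X i ω + (b - X i ω) * T / nr + σ * q (i + 1) ω * Real.sqrt (X i ω) := by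
        funext ω; simpa using hXrec (i + 1) (by omega) hj ω
      rw [hXe]
      exact (ihm.add (((measurable_const.sub ihm).mul_const T).div_const _)).add
        (((hq' (i + 1) (by omega) hj).const_mul σ).mul ihm.sqrt)
  have hGM : MeasurableSet[M] {ω' | ∀ j ≤ m, X j ω' ≤ C} := by
    have hEq : {ω' | ∀ j ≤ m, X j ω' ≤ C} = ⋂ j ∈ Set.Iic m, {ω' | X j ω' ≤ C} := by
      ext ω; simp [Set.mem_iInter₂]
    rw [hEq]
    exact MeasurableSet.biInter (Set.to_countable _) fun j hj =>
      measurableSet_le (hXM j hj) measurable_const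
  have hXm' : Measurable[M] (X m) := hXM m le_rfl
  exact (measurable_const.indicator hGM).mul ((hXm'.sqrt.const_mul (2 * σ)).mul
    (hXm'.add ((measurable_const.sub hXm').mul_const dtv)))

/-- auxiliary stopped process -/
private def cirV {Ω : Type} (X χ : ℕ → Ω → ℝ) : ℕ → Ω → ℝ
  | 0 => X 0
  | m + 1 => fun ω => cirV X χ m ω + χ m ω * (X (m + 1) ω - X m ω)

/-- auxiliary deterministic bound -/
private noncomputable def cirR (x₀ b σ dt : ℝ) : ℕ → ℝ
  | 0 => x₀
  | m + 1 => cirR x₀ b σ dt m + b * dt + σ * Real.sqrt dt * Real.sqrt (cirR x₀ b σ dt m)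

private lemma indepFun_of_measurable_le {Ω : Type} {mΩ : MeasurableSpace Ω} {μ : Measure Ω}
    {M₁ M₂ : MeasurableSpace Ω} (h : Indep M₁ M₂ μ) {f g : Ω → ℝ}
    (hf : Measurable[M₁] f) (hg : Measurable[M₂] g) : IndepFun f g μ := by
  rw [indepFun_iff_measure_inter_preimage_eq_mul]
  intro s t hs ht
  exact (Indep_iff _ _ _).1 h _ _ (hf hs) (hg ht)

set_option maxHeartbeats 2000000 in
theorem cir_truncated_coincide_prob_bound (b σ T x₀ : ℝ)
    (hb : 0 < b) (hσ : 0 < σ) (hσ2 : σ ^ 2 ≤ 2 * b)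
    (hT : 0 < T) (hx₀ : 0 < x₀) :
    ∃ K > 0,
      (∀ (n : ℕ), 2 * T < (n : ℝ) → ∀ C : ℝ, 0 < C →
        ∀ (Ω : Type) (_ : MeasurableSpace Ω) (μ : Measure Ω), IsProbabilityMeasure μ →
        ∀ (q : ℕ → Ω → ℝ), (∀ k, Measurable (q k)) →
        iIndepFun (m := fun _ : Fin n => Real.measurableSpace) (fun i => q (i + 1)) μ →
        (∀ k, 1 ≤ k → k ≤ n →
          μ {ω | q k ω = Real.sqrt (T / n)} = 1 / 2 ∧
            μ {ω | q k ω = -Real.sqrt (T / n)} = 1 / 2) →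
        ∀ (X Y : ℕ → Ω → ℝ), (∀ ω, X 0 ω = x₀) → (∀ ω, Y 0 ω = x₀) →
        (∀ k, 1 ≤ k → k ≤ n → ∀ ω,
          X k ω = X (k - 1) ω + (b - X (k - 1) ω) * T / n
            + σ * q k ω * Real.sqrt (X (k - 1) ω)) →
        (∀ k, 1 ≤ k → k ≤ n → ∀ ω,
          Y k ω = Y (k - 1) ω + (b - min (Y (k - 1) ω) C) * T / n
            + σ * q k ω * Real.sqrt (min (Y (k - 1) ω) C)) →
        μ {ω | ∃ k ≤ n, X k ω ≠ Y k ω} ≤ ENNReal.ofReal (K / C ^ 2)) ∧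
      Filter.Tendsto (fun C : ℝ => K / C ^ 2) Filter.atTop (nhds 0) := by
  classical
  set K₀ : ℝ := b ^ 2 + (2 * b + σ ^ 2) ^ 2 / 4 with hK₀def
  have hK₀pos : 0 < K₀ := by positivity
  refine ⟨x₀ ^ 2 + T * K₀ + 1, by positivity, ?_, ?_⟩
  swap
  · exact Filter.Tendsto.div_atTop tendsto_const_nhds (Filter.tendsto_pow_atTop two_ne_zero)
  intro n hn C hC Ω mΩ μ hμ q hqmeas hqindep hq X Y hX0 hY0 hX hY
  -- basic numerics
  have hn0 : (0:ℝ) < n := lt_trans (by positivity) hn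
  have hnne : n ≠ 0 := by
    intro h; rw [h] at hn0; norm_num at hn0
  have hn1 : 1 ≤ n := Nat.one_le_iff_ne_zero.2 hnne
  set dt : ℝ := T / n with hdtdef
  have hdt : 0 < dt := div_pos hT hn0
  have hdt2 : dt ≤ 1 / 2 := by
    rw [hdtdef, div_le_iff₀ hn0]; linarith
  set rq : ℝ := Real.sqrt dt with hrqdef
  have hrq : 0 < rq := Real.sqrt_pos.2 hdt
  have hstep : ∀ z : ℝ, (b - z) * T / n = (b - z) * dt := fun z => by
    rw [hdtdef, mul_div_assoc]
  -- measurability of X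
  have hXmeas : ∀ k, k ≤ n → Measurable (X k) := by
    intro k
    induction k with
    | zero =>
      intro _
      have hXe : X 0 = fun _ => x₀ := funext hX0
      rw [hXe]; exact measurable_const
    | succ m ih =>
      intro hm
      have ihm := ih (by omega)
      have hXe : X (m+1) = fun ω =>
          X m ω + (b - X m ω) * T / n + σ * q (m+1) ω * Real.sqrt (X m ω) := by
        funext ω; simpa using hX (m+1) (by omega) hm ω
      rw [hXe]
      exact (ihm.add (((measurable_const.sub ihm).mul_const T).div_const _)).add
        (((hqmeas (m+1)).const_mul σ).mul ihm.sqrt)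
  -- the stopping sets are measurable
  have hGmeas : ∀ m, m ≤ n → MeasurableSet {ω | ∀ j ≤ m, X j ω ≤ C} := by
    intro m hm
    have hEq : {ω | ∀ j ≤ m, X j ω ≤ C} = ⋂ j ∈ Set.Iic m, {ω | X j ω ≤ C} := by
      ext ω; simp [Set.mem_iInter₂]
    rw [hEq]
    exact MeasurableSet.biInter (Set.to_countable _) fun j hj =>
      measurableSet_le (hXmeas j (le_trans hj hm)) measurable_const
  set χ : ℕ → Ω → ℝ := fun m ω => if ∀ j ≤ m, X j ω ≤ C then 1 else 0 with hχdef
  set V : ℕ → Ω → ℝ := cirV X χ with hVdef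
  have hχ1 : ∀ m ω, (∀ j ≤ m, X j ω ≤ C) → χ m ω = 1 := by
    intro m ω hG; simp only [hχdef, if_pos hG]
  have hχ0 : ∀ m ω, ¬(∀ j ≤ m, X j ω ≤ C) → χ m ω = 0 := by
    intro m ω hG; simp only [hχdef, if_neg hG]
  have hχmeas : ∀ m, m ≤ n → Measurable (χ m) := by
    intro m hm
    have hEq : χ m = Set.indicator {ω | ∀ j ≤ m, X j ω ≤ C} (fun _ => (1:ℝ)) := by
      funext ω
      by_cases hG : ∀ j ≤ m, X j ω ≤ C
      · rw [hχ1 m ω hG, Set.indicator_of_mem (show ω ∈ {ω' | ∀ j ≤ m, X j ω' ≤ C} from hG)]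
      · rw [hχ0 m ω hG, Set.indicator_of_notMem (show ω ∉ {ω' | ∀ j ≤ m, X j ω' ≤ C} from hG)]
    rw [hEq]
    exact measurable_const.indicator (hGmeas m hm)
  have hVs : ∀ m ω, V (m+1) ω = V m ω + χ m ω * (X (m+1) ω - X m ω) := fun m ω => rfl
  have hV0 : ∀ ω, V 0 ω = X 0 ω := fun ω => rfl
  have hVmeas : ∀ m, m ≤ n → Measurable (V m) := by
    intro m
    induction m with
    | zero =>
      intro _
      have : V 0 = X 0 := rfl
      rw [this]; exact hXmeas 0 (by omega)
    | succ m ih =>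
      intro hm
      have : V (m+1) = fun ω => V m ω + χ m ω * (X (m+1) ω - X m ω) := rfl
      rw [this]
      exact (ih (by omega)).add ((hχmeas m (by omega)).mul ((hXmeas (m+1) hm).sub
        (hXmeas m (by omega))))
  -- V equals X while we have not exceeded the level C
  have hVX : ∀ m ω, (∀ j ≤ m, X j ω ≤ C) → V m ω = X m ω := by
    intro m
    induction m with
    | zero => intro ω _; rfl
    | succ m ih =>
      intro ω hG
      have hGm : ∀ j ≤ m, X j ω ≤ C := fun j hj => hG j (by omega)
      rw [hVs m ω, hχ1 m ω hGm, ih ω hGm]; ring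
  -- if the level is exceeded, then V exceeds C
  have hVgt : ∀ m ω, ¬(∀ j ≤ m, X j ω ≤ C) → C < V m ω := by
    intro m
    induction m with
    | zero =>
      intro ω hG
      push_neg at hG
      obtain ⟨j, hj, hjC⟩ := hG
      have hj0 : j = 0 := Nat.le_zero.1 hj
      rw [hj0] at hjC
      exact hjC
    | succ m ih =>
      intro ω hG
      by_cases hGm : ∀ j ≤ m, X j ω ≤ C
      · have hx : ¬ X (m+1) ω ≤ C := by
          intro hle
          apply hG
          intro j hj
          rcases Nat.lt_or_ge j (m+1) with hj' | hj'
          · exact hGm j (by omega)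
          · have hjm : j = m + 1 := by omega
            rw [hjm]; exact hle
        rw [hVs m ω, hχ1 m ω hGm, hVX m ω hGm]
        have := lt_of_not_ge hx
        nlinarith
      · rw [hVs m ω, hχ0 m ω hGm]
        have := ih ω hGm
        nlinarith
  -- a.e. the q's take only the two values ± rq
  have hqv : ∀ k, 1 ≤ k → k ≤ n → ∀ᵐ ω ∂μ, q k ω = rq ∨ q k ω = -rq := by
    intro k h1 h2
    obtain ⟨e1, e2⟩ := hq k h1 h2
    have hA : MeasurableSet {ω | q k ω = rq} := hqmeas k (measurableSet_singleton rq)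
    have hB : MeasurableSet {ω | q k ω = -rq} := hqmeas k (measurableSet_singleton (-rq))
    have hdisj : Disjoint {ω | q k ω = rq} {ω | q k ω = -rq} := by
      rw [Set.disjoint_left]
      intro ω hω1 hω2
      simp only [Set.mem_setOf_eq] at hω1 hω2
      rw [hω1] at hω2
      linarith
    have hunion : μ ({ω | q k ω = rq} ∪ {ω | q k ω = -rq}) = 1 := by
      rw [measure_union hdisj hB, e1, e2]
      exact ENNReal.add_halves 1
    have hcompl : μ ({ω | q k ω = rq} ∪ {ω | q k ω = -rq})ᶜ = 0 := by
      rw [measure_compl (hA.union hB) (measure_ne_top μ _), hunion, measure_univ]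
      simp
    rw [ae_iff]
    refine measure_mono_null ?_ hcompl
    intro ω hω
    simp only [Set.mem_setOf_eq] at hω
    simp only [Set.mem_compl_iff, Set.mem_union, Set.mem_setOf_eq]
    tauto
  have hqae : ∀ᵐ ω ∂μ, ∀ k, 1 ≤ k → k ≤ n → q k ω = rq ∨ q k ω = -rq := by
    rw [ae_all_iff]
    intro k
    by_cases hk : 1 ≤ k ∧ k ≤ n
    · filter_upwards [hqv k hk.1 hk.2] with ω h _ _
      exact h
    · filter_upwards with ω h1 h2
      exact absurd ⟨h1, h2⟩ hk
  -- facts about the deterministic bound R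
  have hR0 : ∀ m, 0 ≤ cirR x₀ b σ dt m := by
    intro m
    induction m with
    | zero => exact hx₀.le
    | succ m ih =>
      show 0 ≤ cirR x₀ b σ dt m + b * dt + σ * Real.sqrt dt * Real.sqrt (cirR x₀ b σ dt m)
      have h1 : 0 ≤ b * dt := by positivity
      have h2 : 0 ≤ σ * Real.sqrt dt * Real.sqrt (cirR x₀ b σ dt m) := by positivity
      linarith
  have hRmono : ∀ m, cirR x₀ b σ dt m ≤ cirR x₀ b σ dt (m+1) := by
    intro m
    show cirR x₀ b σ dt m ≤ cirR x₀ b σ dt m + b * dt + σ * Real.sqrt dt * Real.sqrt (cirR x₀ b σ dt m)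
    have h1 : 0 ≤ b * dt := by positivity
    have h2 : 0 ≤ σ * Real.sqrt dt * Real.sqrt (cirR x₀ b σ dt m) := by positivity
    linarith
  -- a.e. bounds on X
  have hXbd : ∀ᵐ ω ∂μ, ∀ k ≤ n, 0 ≤ X k ω ∧ X k ω ≤ cirR x₀ b σ dt k := by
    filter_upwards [hqae] with ω hω
    intro k
    induction k with
    | zero =>
      intro _
      rw [hX0 ω]
      exact ⟨hx₀.le, le_refl _⟩
    | succ m ih =>
      intro hm
      obtain ⟨ih0, ih1⟩ := ih (by omega)
      have hqval := hω (m+1) (by omega) hm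
      have habs : |q (m+1) ω| ≤ Real.sqrt dt := by
        rcases hqval with h | h <;> rw [h] <;>
          simp [hrqdef, abs_of_nonneg (Real.sqrt_nonneg dt)]
      have hXe := hX (m+1) (by omega) hm ω
      simp only [Nat.add_sub_cancel] at hXe
      rw [hstep] at hXe
      constructor
      · rw [hXe]
        exact cir_aux_nonneg hb hσ hσ2 hdt hdt2 ih0 habs
      · rw [hXe]
        show _ ≤ cirR x₀ b σ dt m + b * dt + σ * Real.sqrt dt * Real.sqrt (cirR x₀ b σ dt m)
        have h1 : (b - X m ω) * dt ≤ b * dt := by nlinarith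
        have ha : q (m+1) ω ≤ Real.sqrt dt := (le_abs_self _).trans habs
        have hsm : Real.sqrt (X m ω) ≤ Real.sqrt (cirR x₀ b σ dt m) := Real.sqrt_le_sqrt ih1
        have h3 : σ * q (m+1) ω * Real.sqrt (X m ω) ≤ σ * Real.sqrt dt * Real.sqrt (X m ω) :=
          mul_le_mul_of_nonneg_right (mul_le_mul_of_nonneg_left ha hσ.le) (Real.sqrt_nonneg _)
        have h4 : σ * Real.sqrt dt * Real.sqrt (X m ω) ≤
            σ * Real.sqrt dt * Real.sqrt (cirR x₀ b σ dt m) :=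
          mul_le_mul_of_nonneg_left hsm (by positivity)
        linarith
  -- a.e. bounds on V
  have hVbd : ∀ᵐ ω ∂μ, ∀ m ≤ n, 0 ≤ V m ω ∧ V m ω ≤ cirR x₀ b σ dt m := by
    filter_upwards [hXbd] with ω hXb
    intro m
    induction m with
    | zero =>
      intro hm
      rw [hV0 ω, hX0 ω]
      exact ⟨hx₀.le, le_refl _⟩
    | succ m ih =>
      intro hm
      obtain ⟨ih0, ih1⟩ := ih (by omega)
      by_cases hG : ∀ j ≤ m, X j ω ≤ C
      · have hV1 : V (m+1) ω = X (m+1) ω := by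
          rw [hVs m ω, hχ1 m ω hG, hVX m ω hG]; ring
        rw [hV1]
        exact hXb (m+1) hm
      · have hV1 : V (m+1) ω = V m ω := by
          rw [hVs m ω, hχ0 m ω hG]; ring
        rw [hV1]
        exact ⟨ih0, ih1.trans (hRmono m)⟩
  -- integrability helper
  have hintb : ∀ (f : Ω → ℝ) (M : ℝ), Measurable f → (∀ᵐ ω ∂μ, |f ω| ≤ M) → Integrable f μ := by
    intro f M hf hbd
    refine Integrable.mono' (integrable_const M) hf.aestronglyMeasurable ?_
    filter_upwards [hbd] with ω h
    simpa [Real.norm_eq_abs] using h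
  -- integrability of V m ^ 2
  have hVsqint : ∀ m, m ≤ n → Integrable (fun ω => (V m ω)^2) μ := by
    intro m hm
    refine hintb _ ((cirR x₀ b σ dt m)^2) ((hVmeas m hm).pow_const 2) ?_
    filter_upwards [hVbd] with ω hVb
    obtain ⟨h0, h1⟩ := hVb m hm
    rw [abs_of_nonneg (by positivity)]
    exact pow_le_pow_left₀ h0 h1 2
  -- expectation of q k is zero
  have hqzero : ∀ k, 1 ≤ k → k ≤ n → ∫ ω, q k ω ∂μ = 0 := by
    intro k h1 h2
    obtain ⟨e1, e2⟩ := hq k h1 h2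
    have hA : MeasurableSet {ω | q k ω = rq} := hqmeas k (measurableSet_singleton rq)
    have hB : MeasurableSet {ω | q k ω = -rq} := hqmeas k (measurableSet_singleton (-rq))
    have hae : q k =ᵐ[μ] fun ω => Set.indicator {ω' | q k ω' = rq} (fun _ => rq) ω
        + Set.indicator {ω' | q k ω' = -rq} (fun _ => -rq) ω := by
      filter_upwards [hqv k h1 h2] with ω hω
      rcases hω with h | h
      · have hmem : ω ∈ {ω' | q k ω' = rq} := h
        have hnot : ω ∉ {ω' | q k ω' = -rq} := by
          intro hmem2
          simp only [Set.mem_setOf_eq] at hmem2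
          rw [h] at hmem2; linarith
        rw [Set.indicator_of_mem hmem, Set.indicator_of_notMem hnot, h]; ring
      · have hmem : ω ∈ {ω' | q k ω' = -rq} := h
        have hnot : ω ∉ {ω' | q k ω' = rq} := by
          intro hmem2
          simp only [Set.mem_setOf_eq] at hmem2
          rw [h] at hmem2; linarith
        rw [Set.indicator_of_mem hmem, Set.indicator_of_notMem hnot, h]; ring
    rw [integral_congr_ae hae, integral_add ((integrable_const rq).indicator hA)
      ((integrable_const (-rq)).indicator hB), integral_indicator_const _ hA,
      integral_indicator_const _ hB, measureReal_def, measureReal_def, e1, e2]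
    simp only [smul_eq_mul]
    ring
  have hqint : ∀ k, 1 ≤ k → k ≤ n → Integrable (q k) μ := by
    intro k h1 h2
    refine hintb _ rq (hqmeas k) ?_
    filter_upwards [hqv k h1 h2] with ω hω
    rcases hω with h | h <;> rw [h] <;> simp [abs_of_nonneg hrq.le]
  -- the key one-step inequality
  have key : ∀ m, m + 1 ≤ n →
      ∫ ω, (V (m+1) ω)^2 ∂μ ≤ (∫ ω, (V m ω)^2 ∂μ) + dt * K₀ := by
    intro m hm1
    set A : Ω → ℝ := fun ω => χ m ω *
      (2 * X m ω * ((b - X m ω) * dt) + ((b - X m ω) * dt)^2 + σ^2 * X m ω * dt) with hAdef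
    set B : Ω → ℝ := fun ω => χ m ω *
      (2 * σ * Real.sqrt (X m ω) * (X m ω + (b - X m ω) * dt)) with hBdef
    -- pointwise identity a.e.
    have hid : ∀ᵐ ω ∂μ, (V (m+1) ω)^2 = (V m ω)^2 + A ω + B ω * q (m+1) ω := by
      filter_upwards [hqae, hXbd] with ω hqv' hXb
      by_cases hG : ∀ j ≤ m, X j ω ≤ C
      · have hqsq : (q (m+1) ω)^2 = dt := by
          rcases hqv' (m+1) (by omega) hm1 with h | h <;> rw [h] <;>
            simp [hrqdef, Real.sq_sqrt hdt.le]
        have hx0 : 0 ≤ X m ω := (hXb m (by omega)).1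
        have hsx : Real.sqrt (X m ω)^2 = X m ω := Real.sq_sqrt hx0
        have hV1 : V (m+1) ω = X (m+1) ω := by
          rw [hVs m ω, hχ1 m ω hG, hVX m ω hG]; ring
        have hXe := hX (m+1) (by omega) hm1 ω
        simp only [Nat.add_sub_cancel] at hXe
        rw [hstep] at hXe
        rw [hV1, hXe, hVX m ω hG]
        simp only [hAdef, hBdef, hχ1 m ω hG, one_mul]
        linear_combination (σ^2 * (q (m+1) ω)^2) * hsx + (σ^2 * X m ω) * hqsq
      · have hV1 : V (m+1) ω = V m ω := by rw [hVs m ω, hχ0 m ω hG]; ring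
        rw [hV1]
        simp [hAdef, hBdef, hχ0 m ω hG]
    -- bounds on the coefficients
    have hχabs : ∀ ω, |χ m ω| ≤ 1 := by
      intro ω
      by_cases hG : ∀ j ≤ m, X j ω ≤ C
      · rw [hχ1 m ω hG]; norm_num
      · rw [hχ0 m ω hG]; norm_num
    set Rm : ℝ := cirR x₀ b σ dt m with hRmdef
    have hAbd : ∀ᵐ ω ∂μ, |A ω| ≤ (Rm + b + 1)^2 * (3 + σ^2) := by
      filter_upwards [hXbd] with ω hXb
      obtain ⟨h0, h1⟩ := hXb m (by omega)
      rw [hAdef, abs_mul]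
      calc |χ m ω| * |2 * X m ω * ((b - X m ω) * dt) + ((b - X m ω) * dt)^2 + σ^2 * X m ω * dt|
          ≤ 1 * ((Rm + b + 1)^2 * (3 + σ^2)) := by
            apply mul_le_mul (hχabs ω) (cir_aux_Abound hb hσ hdt hdt2 h0 h1)
              (abs_nonneg _) (by norm_num)
        _ = (Rm + b + 1)^2 * (3 + σ^2) := one_mul _
    have hBbd : ∀ᵐ ω ∂μ, |B ω| ≤ 4 * σ * (Rm + b + 1)^2 := by
      filter_upwards [hXbd] with ω hXb
      obtain ⟨h0, h1⟩ := hXb m (by omega)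
      rw [hBdef, abs_mul]
      calc |χ m ω| * |2 * σ * Real.sqrt (X m ω) * (X m ω + (b - X m ω) * dt)|
          ≤ 1 * (4 * σ * (Rm + b + 1)^2) := by
            apply mul_le_mul (hχabs ω) (cir_aux_Bbound hb hσ hdt hdt2 h0 h1)
              (abs_nonneg _) (by positivity)
        _ = 4 * σ * (Rm + b + 1)^2 := one_mul _
    -- measurability of A and B
    have hXmm := hXmeas m (by omega)
    have hχmm := hχmeas m (by omega)
    have hAmeas : Measurable A := by
      rw [hAdef]
      exact hχmm.mul ((((hXmm.const_mul 2).mul ((measurable_const.sub hXmm).mul_const dt)).add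
        (((measurable_const.sub hXmm).mul_const dt).pow_const 2)).add
        ((hXmm.const_mul (σ^2)).mul_const dt))
    have hBmeas : Measurable B := by
      rw [hBdef]
      exact hχmm.mul ((hXmm.sqrt.const_mul (2 * σ)).mul
        (hXmm.add ((measurable_const.sub hXmm).mul_const dt)))
    -- integrability
    have hAint : Integrable A μ := hintb A ((Rm + b + 1)^2 * (3 + σ^2)) hAmeas hAbd
    have hBint : Integrable B μ := hintb B (4 * σ * (Rm + b + 1)^2) hBmeas hBbd
    have hsdt1 : Real.sqrt dt ≤ 1 := Real.sqrt_le_one.2 (by linarith)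
    have hBqint : Integrable (fun ω => B ω * q (m+1) ω) μ := by
      refine hintb _ (4 * σ * (Rm + b + 1)^2) (hBmeas.mul (hqmeas (m+1))) ?_
      filter_upwards [hBbd, hqv (m+1) (by omega) hm1] with ω h1 h2
      have hq1 : |q (m+1) ω| ≤ 1 := by
        rcases h2 with h | h <;> rw [h] <;>
          simp [hrqdef, abs_of_nonneg (Real.sqrt_nonneg dt), hsdt1]
      calc |B ω * q (m+1) ω| = |B ω| * |q (m+1) ω| := abs_mul _ _
        _ ≤ (4 * σ * (Rm + b + 1)^2) * 1 := by
            apply mul_le_mul h1 hq1 (abs_nonneg _) (by positivity)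
        _ = 4 * σ * (Rm + b + 1)^2 := mul_one _
    -- independence of B and q (m+1)
    have hindepBq : IndepFun B (q (m+1)) μ := by
      have hiI : iIndep (fun i : Fin n =>
          MeasurableSpace.comap (q ((i : ℕ) + 1)) Real.measurableSpace) μ := hqindep.iIndep
      have hle : ∀ i : Fin n,
          MeasurableSpace.comap (q ((i : ℕ) + 1)) Real.measurableSpace ≤ mΩ :=
        fun i => (hqmeas _).comap_le
      have hST : Disjoint {i : Fin n | (i : ℕ) < m} {i : Fin n | (i : ℕ) = m} := by
        rw [Set.disjoint_left]
        intro i h1 h2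
        simp only [Set.mem_setOf_eq] at h1 h2
        omega
      have hInd := indep_iSup_of_disjoint hle hiI hST
      refine indepFun_of_measurable_le hInd ?_ ?_
      · -- B is measurable wrt the sup over {i | i < m}
        have hEqB : B = fun ω => Set.indicator {ω' | ∀ j ≤ m, X j ω' ≤ C} (fun _ => (1:ℝ)) ω *
            (2 * σ * Real.sqrt (X m ω) * (X m ω + (b - X m ω) * dt)) := by
          funext ω
          simp only [hBdef]
          by_cases hG : ∀ j ≤ m, X j ω ≤ C
          · rw [hχ1 m ω hG,
              Set.indicator_of_mem (show ω ∈ {ω' | ∀ j ≤ m, X j ω' ≤ C} from hG)]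
          · rw [hχ0 m ω hG,
              Set.indicator_of_notMem (show ω ∉ {ω' | ∀ j ≤ m, X j ω' ≤ C} from hG)]
        rw [hEqB]
        refine cir_meas_B hX0 (fun j h1 h2 ω => hX j h1 (by omega) ω) ?_
        intro j h1 h2
        refine Measurable.mono (measurable_iff_comap_le.2 le_rfl) ?_ le_rfl
        have hj' : j - 1 < n := by omega
        have hmem : (⟨j - 1, hj'⟩ : Fin n) ∈ {i : Fin n | (i : ℕ) < m} := by
          simp only [Set.mem_setOf_eq]; omega
        have hle2 := le_biSup (fun i : Fin n =>
          MeasurableSpace.comap (q ((i : ℕ) + 1)) Real.measurableSpace) hmem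
        simpa [show j - 1 + 1 = j from by omega] using hle2
      · -- q (m+1) is measurable wrt the sup over {i | i = m}
        have hm' : m < n := by omega
        refine Measurable.mono (measurable_iff_comap_le.2 le_rfl) ?_ le_rfl
        have hmem : (⟨m, hm'⟩ : Fin n) ∈ {i : Fin n | (i : ℕ) = m} := rfl
        have hle2 := le_biSup (fun i : Fin n =>
          MeasurableSpace.comap (q ((i : ℕ) + 1)) Real.measurableSpace) hmem
        simpa using hle2
    -- the product term integrates to zero
    have hz : ∫ ω, B ω * q (m+1) ω ∂μ = 0 := by
      have hmm := IndepFun.integral_mul_eq_mul_integral hindepBq hBint.aestronglyMeasurable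
        (hqint (m+1) (by omega) hm1).aestronglyMeasurable
      rw [hqzero (m+1) (by omega) hm1, mul_zero] at hmm
      exact hmm
    -- the drift term is bounded by dt * K₀
    have hAle : ∫ ω, A ω ∂μ ≤ dt * K₀ := by
      have hbd : ∀ᵐ ω ∂μ, A ω ≤ dt * K₀ := by
        filter_upwards [hXbd] with ω hXb
        obtain ⟨h0, _⟩ := hXb m (by omega)
        by_cases hG : ∀ j ≤ m, X j ω ≤ C
        · rw [hAdef]
          simp only [hχ1 m ω hG, one_mul]
          rw [hK₀def]
          exact cir_aux_drift hb hσ hdt hdt2 h0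
        · rw [hAdef]
          simp only [hχ0 m ω hG, zero_mul]
          positivity
      calc ∫ ω, A ω ∂μ ≤ ∫ _, dt * K₀ ∂μ := integral_mono_ae hAint (integrable_const _) hbd
        _ = dt * K₀ := by simp [integral_const]
    -- put everything together
    have hVsq := hVsqint m (by omega)
    calc ∫ ω, (V (m+1) ω)^2 ∂μ
        = ∫ ω, ((V m ω)^2 + A ω + B ω * q (m+1) ω) ∂μ := integral_congr_ae hid
      _ = (∫ ω, ((V m ω)^2 + A ω) ∂μ) + ∫ ω, B ω * q (m+1) ω ∂μ :=
          integral_add (hVsq.add hAint) hBqint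
      _ = (∫ ω, (V m ω)^2 ∂μ) + (∫ ω, A ω ∂μ) + ∫ ω, B ω * q (m+1) ω ∂μ := by
          rw [integral_add hVsq hAint]
      _ = (∫ ω, (V m ω)^2 ∂μ) + (∫ ω, A ω ∂μ) := by rw [hz]; ring
      _ ≤ (∫ ω, (V m ω)^2 ∂μ) + dt * K₀ := by linarith
  -- moment bound by induction
  have hmoment : ∀ m, m ≤ n → ∫ ω, (V m ω)^2 ∂μ ≤ x₀^2 + m * (dt * K₀) := by
    intro m
    induction m with
    | zero =>
      intro _
      have hVe : (fun ω => (V 0 ω)^2) = fun _ => x₀^2 := by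
        funext ω; rw [hV0 ω, hX0 ω]
      rw [hVe, integral_const]
      simp
    | succ m ih =>
      intro hm
      calc ∫ ω, (V (m+1) ω)^2 ∂μ ≤ (∫ ω, (V m ω)^2 ∂μ) + dt * K₀ := key m hm
        _ ≤ x₀^2 + m * (dt * K₀) + dt * K₀ := by linarith [ih (by omega)]
        _ = x₀^2 + (m+1 : ℕ) * (dt * K₀) := by push_cast; ring
  -- event inclusion
  have hincl : {ω | ∃ k ≤ n, X k ω ≠ Y k ω} ⊆ {ω | C^2 ≤ (V (n-1) ω)^2} := by
    intro ω hω
    simp only [Set.mem_setOf_eq] at hω ⊢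
    by_cases hG : ∀ j ≤ n - 1, X j ω ≤ C
    · exfalso
      have hXY : ∀ k, k ≤ n → X k ω = Y k ω := by
        intro k
        induction k with
        | zero => intro _; rw [hX0, hY0]
        | succ j ih =>
          intro hj
          have hXe := hX (j+1) (by omega) hj ω
          have hYe := hY (j+1) (by omega) hj ω
          simp only [Nat.add_sub_cancel] at hXe hYe
          have hXj : X j ω = Y j ω := ih (by omega)
          have hjC : X j ω ≤ C := hG j (by omega)
          rw [hXe, hYe, ← hXj, min_eq_left hjC]
      obtain ⟨k, hk, hne⟩ := hω
      exact hne (hXY k hk)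
    · have hlt := hVgt (n-1) ω hG
      exact pow_le_pow_left₀ hC.le hlt.le 2
  -- Markov's inequality
  have hVI := hVsqint (n-1) (by omega)
  have hmark := mul_meas_ge_le_integral_of_nonneg (μ := μ)
    (f := fun ω => (V (n-1) ω)^2) (ae_of_all μ fun ω => sq_nonneg _) hVI (C^2)
  have hVn : ∫ ω, (V (n-1) ω)^2 ∂μ ≤ x₀^2 + T * K₀ := by
    have hmom := hmoment (n-1) (by omega)
    have hcast : ((n-1 : ℕ) : ℝ) ≤ (n : ℝ) := by
      exact_mod_cast Nat.sub_le n 1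
    have hndt : (n : ℝ) * dt = T := by
      rw [hdtdef]; field_simp
    have hstepT : ((n-1 : ℕ) : ℝ) * dt ≤ T := by
      calc ((n-1 : ℕ) : ℝ) * dt ≤ (n : ℝ) * dt := mul_le_mul_of_nonneg_right hcast hdt.le
        _ = T := hndt
    have h2 : ((n-1 : ℕ) : ℝ) * (dt * K₀) ≤ T * K₀ := by
      rw [← mul_assoc]
      exact mul_le_mul_of_nonneg_right hstepT hK₀pos.le
    linarith
  have hμle : μ {ω | ∃ k ≤ n, X k ω ≠ Y k ω} ≤ μ {ω | C^2 ≤ (V (n-1) ω)^2} :=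
    measure_mono hincl
  have hfin : μ {ω | C^2 ≤ (V (n-1) ω)^2} ≠ ⊤ := measure_ne_top μ _
  have hmark' : C^2 * (μ {ω | C^2 ≤ (V (n-1) ω)^2}).toReal ≤ ∫ ω, (V (n-1) ω)^2 ∂μ := hmark
  have htoReal : (μ {ω | C^2 ≤ (V (n-1) ω)^2}).toReal ≤ (x₀^2 + T * K₀) / C^2 := by
    rw [le_div_iff₀ (by positivity), mul_comm]
    linarith [hmark', hVn]
  calc μ {ω | ∃ k ≤ n, X k ω ≠ Y k ω} ≤ μ {ω | C^2 ≤ (V (n-1) ω)^2} := hμle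
    _ = ENNReal.ofReal ((μ {ω | C^2 ≤ (V (n-1) ω)^2}).toReal) :=
        (ENNReal.ofReal_toReal hfin).symm
    _ ≤ ENNReal.ofReal ((x₀^2 + T * K₀) / C^2) := ENNReal.ofReal_le_ofReal htoReal
    _ ≤ ENNReal.ofReal ((x₀^2 + T * K₀ + 1) / C^2) := by
        refine ENNReal.ofReal_le_ofReal ?_
        exact (div_le_div_iff_of_pos_right (by positivity)).mpr (by linarith)
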